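/- In the space X of the ultrafilter construction (X = κ ⊔ ω with base {V ∪ U : V ∈ 𝒱, U ∈ 𝒰}, 𝒱 an ultrafilter on κ extending the co-<κ filter, 𝒰 a free ultrafilter on ω), no subset I ⊆ κ with |I| < κ is dense in X. Consequently X has a dense subset (namely κ itself) of density κ, so δ(X) = κ. -/

import Mathlib

open Cardinal Set TopologicalSpace

universe u

/-- The density of a topological space: least cardinality of a dense subset. -/
noncomputable def densityCard (X : Type u) [TopologicalSpace X] : Cardinal.{u} :=
  sInf {c | ∃ D : Set X, Dense D ∧ #D = c}

/-- δ(X): the supremum of the densities of dense subspaces of `X`. -/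
noncomputable def deltaCard (X : Type u) [TopologicalSpace X] : Cardinal.{u} :=
  ⨆ D : {D : Set X // Dense D}, densityCard ↥(D.1)

/-- A π-base: a family of nonempty open sets such that every nonempty open set
contains a member of the family. -/
def IsPiBase {X : Type u} [TopologicalSpace X] (B : Set (Set X)) : Prop :=
  (∀ U ∈ B, IsOpen U ∧ U.Nonempty) ∧
  ∀ U : Set X, IsOpen U → U.Nonempty → ∃ V ∈ B, V ⊆ U

/-- The π-weight: least cardinality of a π-base. -/
noncomputable def piWeight (X : Type u) [TopologicalSpace X] : Cardinal.{u} :=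
  sInf {c | ∃ B : Set (Set X), IsPiBase B ∧ #B = c}

/-- The weight: least cardinality of a base of the topology. -/
noncomputable def weightCard (X : Type u) [TopologicalSpace X] : Cardinal.{u} :=
  sInf {c | ∃ B : Set (Set X), IsTopologicalBasis B ∧ #B = c}

/-- The set of points played by Player II before stage `β`. -/
def PlayedSet {X : Type u} (x : Ordinal.{u} → X) (β : Ordinal.{u}) : Set X :=
  {p | ∃ α < β, x α = p}

/-- Player I has a winning strategy in the open-point game `G_{X,θ}`:
there is a strategy `U` assigning to each history of points played by Player II a
nonempty open set (at positions where the played points are not yet dense), depending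
only on the initial segment of the history, such that in every run in which Player II
plays legally, the set of played points becomes dense at some stage `β < θ`. -/
def PlayerIWins (X : Type u) [TopologicalSpace X] (θ : Ordinal.{u}) : Prop :=
  ∃ U : (Ordinal.{u} → X) → Ordinal.{u} → Set X,
    (∀ x β, ¬ Dense (PlayedSet x β) → IsOpen (U x β) ∧ (U x β).Nonempty) ∧
    (∀ x y β, (∀ α < β, x α = y α) → U x β = U y β) ∧
    ∀ x : Ordinal.{u} → X, (∀ β < θ, ¬ Dense (PlayedSet x β) → x β ∈ U x β) →
      ∃ β < θ, Dense (PlayedSet x β)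

/-- gd(X): the least infinite cardinal κ such that Player I has a winning strategy
in the open-point game `G_{X,κ⁺}`. -/
noncomputable def gd (X : Type u) [TopologicalSpace X] : Cardinal.{u} :=
  sInf {κ | ℵ₀ ≤ κ ∧ PlayerIWins X (Order.succ κ).ord}

/-- In the ultrafilter space `X = κ ⊔ ω`, no subset of the `κ`-part of
cardinality `< κ` is dense; the `κ`-part itself is dense, and `δ(X) = κ`. -/
theorem stmt10 (κ : Cardinal.{u}) (hκ : ℵ₀ < κ)
    (𝒱 : Ultrafilter κ.ord.ToType)
    (h𝒱 : ∀ s : Set κ.ord.ToType, #↥(sᶜ) < κ → s ∈ 𝒱)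
    (𝒰 : Ultrafilter ℕ) (h𝒰 : (𝒰 : Filter ℕ) ≤ Filter.cofinite)
    [t : TopologicalSpace (κ.ord.ToType ⊕ ℕ)]
    (ht : t = TopologicalSpace.generateFrom
      {s | ∃ V ∈ 𝒱, ∃ U ∈ 𝒰, s = Sum.inl '' V ∪ Sum.inr '' U}) :
    (∀ I : Set κ.ord.ToType, #I < κ → ¬ Dense (Sum.inl '' I : Set (κ.ord.ToType ⊕ ℕ))) ∧
      Dense (Set.range (Sum.inl : κ.ord.ToType → κ.ord.ToType ⊕ ℕ)) ∧
      deltaCard (κ.ord.ToType ⊕ ℕ) = κ := by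
  set B : Set (Set (κ.ord.ToType ⊕ ℕ)) :=
    {s | ∃ V ∈ 𝒱, ∃ U ∈ 𝒰, s = Sum.inl '' V ∪ Sum.inr '' U} with hB
  have hgen : ∀ s : Set (κ.ord.ToType ⊕ ℕ), IsOpen s ↔ TopologicalSpace.GenerateOpen B s := by
    rw [ht]; exact fun s => Iff.rfl
  -- every nonempty open set contains a basic set
  have key : ∀ s : Set (κ.ord.ToType ⊕ ℕ), TopologicalSpace.GenerateOpen B s → s.Nonempty →
      ∃ V ∈ 𝒱, ∃ U ∈ 𝒰, Sum.inl '' V ∪ Sum.inr '' U ⊆ s := by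
    intro s hs
    induction hs with
    | basic t ht =>
        intro _
        obtain ⟨V, hV, U, hU, rfl⟩ := ht
        exact ⟨V, hV, U, hU, subset_rfl⟩
    | univ => exact fun _ => ⟨univ, Filter.univ_mem, univ, Filter.univ_mem, subset_univ _⟩
    | inter s t hs ht ihs iht =>
        rintro ⟨x, hxs, hxt⟩
        obtain ⟨V1, hV1, U1, hU1, h1⟩ := ihs ⟨x, hxs⟩
        obtain ⟨V2, hV2, U2, hU2, h2⟩ := iht ⟨x, hxt⟩
        refine ⟨V1 ∩ V2, Filter.inter_mem hV1 hV2, U1 ∩ U2, Filter.inter_mem hU1 hU2, ?_⟩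
        rintro z (⟨a, ⟨ha1, ha2⟩, rfl⟩ | ⟨n, ⟨hn1, hn2⟩, rfl⟩)
        · exact ⟨h1 (Or.inl ⟨a, ha1, rfl⟩), h2 (Or.inl ⟨a, ha2, rfl⟩)⟩
        · exact ⟨h1 (Or.inr ⟨n, hn1, rfl⟩), h2 (Or.inr ⟨n, hn2, rfl⟩)⟩
    | sUnion S hS ih =>
        rintro ⟨x, tt, htS, hxt⟩
        obtain ⟨V, hV, U, hU, h⟩ := ih tt htS ⟨x, hxt⟩
        exact ⟨V, hV, U, hU, h.trans (subset_sUnion_of_mem htS)⟩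
  have part1 : ∀ I : Set κ.ord.ToType, #I < κ →
      ¬ Dense (Sum.inl '' I : Set (κ.ord.ToType ⊕ ℕ)) := by
    intro I hI hd
    have hVc : Iᶜ ∈ 𝒱 := h𝒱 Iᶜ (by rwa [compl_compl])
    have hopenb : IsOpen (Sum.inl '' Iᶜ ∪ Sum.inr '' (univ : Set ℕ)) :=
      (hgen _).mpr (TopologicalSpace.GenerateOpen.basic _ ⟨Iᶜ, hVc, univ, Filter.univ_mem, rfl⟩)
    obtain ⟨x, hx1, hx2⟩ := (dense_iff_inter_open.mp hd) _ hopenb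
      ⟨Sum.inr 0, Or.inr ⟨0, trivial, rfl⟩⟩
    rcases hx1 with ⟨a, ha, rfl⟩ | ⟨n, _, rfl⟩
    · obtain ⟨b, hb, hba⟩ := hx2
      exact ha (Sum.inl_injective hba ▸ hb)
    · obtain ⟨b, hb, hba⟩ := hx2
      exact Sum.inl_ne_inr hba
  have part2 : Dense (Set.range (Sum.inl : κ.ord.ToType → κ.ord.ToType ⊕ ℕ)) := by
    rw [dense_iff_inter_open]
    intro s hs hne
    obtain ⟨V, hV, U, hU, hsub⟩ := key s ((hgen s).mp hs) hne
    obtain ⟨a, ha⟩ := Filter.nonempty_of_mem hV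
    exact ⟨Sum.inl a, hsub (Or.inl ⟨a, ha, rfl⟩), mem_range_self a⟩
  refine ⟨part1, part2, ?_⟩
  have hXcard : #(κ.ord.ToType ⊕ ℕ) = κ := by
    have : #(κ.ord.ToType ⊕ ℕ) = κ + ℵ₀ := by
      simp [Cardinal.mk_sum, Cardinal.mk_ord_toType]
    rw [this, Cardinal.add_eq_left hκ.le hκ.le]
  -- lower bound on densityCard of the range of inl
  have hlow : κ ≤ densityCard ↥(Set.range (Sum.inl : κ.ord.ToType → κ.ord.ToType ⊕ ℕ)) := by
    have hne : {c | ∃ D : Set ↥(Set.range (Sum.inl : κ.ord.ToType → κ.ord.ToType ⊕ ℕ)),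
        Dense D ∧ #D = c}.Nonempty := ⟨_, ⟨univ, dense_univ, rfl⟩⟩
    apply le_csInf hne
    rintro c ⟨E, hE, rfl⟩
    set I : Set κ.ord.ToType := Sum.inl ⁻¹' (Subtype.val '' E) with hIdef
    have hII : Sum.inl '' I = Subtype.val '' E := by
      apply Set.Subset.antisymm
      · rintro _ ⟨a, ha, rfl⟩; exact ha
      · rintro _ ⟨e, he, rfl⟩
        obtain ⟨a, haa⟩ := e.2
        exact ⟨a, by rw [hIdef, mem_preimage, haa]; exact ⟨e, he, rfl⟩, haa⟩
    have hIdense : Dense (Sum.inl '' I : Set (κ.ord.ToType ⊕ ℕ)) := by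
      rw [dense_iff_inter_open]
      intro s hs hne
      obtain ⟨V, hV, U, hU, hsub⟩ := key s ((hgen s).mp hs) hne
      obtain ⟨a, ha⟩ := Filter.nonempty_of_mem hV
      have hxs : (⟨Sum.inl a, mem_range_self a⟩ :
          ↥(Set.range (Sum.inl : κ.ord.ToType → κ.ord.ToType ⊕ ℕ))) ∈
          (Subtype.val ⁻¹' s) := hsub (Or.inl ⟨a, ha, rfl⟩)
      obtain ⟨e, he1, he2⟩ := (dense_iff_inter_open.mp hE) _
        (hs.preimage continuous_subtype_val) ⟨_, hxs⟩
      exact ⟨e.1, he1, hII ▸ ⟨e, he2, rfl⟩⟩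
    by_contra hlt
    push_neg at hlt
    have hIcard : #I < κ := by
      have h1 : #I ≤ #E := by
        have : #(Sum.inl '' I : Set (κ.ord.ToType ⊕ ℕ)) = #I :=
          Cardinal.mk_image_eq Sum.inl_injective
        rw [← this, hII]
        exact Cardinal.mk_image_le
      exact lt_of_le_of_lt h1 hlt
    exact part1 I hIcard hIdense
  haveI : Nonempty {D : Set (κ.ord.ToType ⊕ ℕ) // Dense D} := ⟨⟨univ, dense_univ⟩⟩
  apply le_antisymm
  · apply ciSup_le
    rintro ⟨D, hD⟩
    calc densityCard ↥D ≤ #↥D := csInf_le' ⟨univ, dense_univ, Cardinal.mk_univ⟩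
      _ ≤ #(κ.ord.ToType ⊕ ℕ) := Cardinal.mk_set_le D
      _ = κ := hXcard
  · exact hlow.trans (le_ciSup (Cardinal.bddAbove_range _)
      (⟨_, part2⟩ : {D : Set (κ.ord.ToType ⊕ ℕ) // Dense D}))
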